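/- Let n ≥ 3 and let Δ := {ε_i − ε_j : 1 ≤ i ≠ j ≤ n} ⊂ ℝ^n be the root system of psq(n). For 1 ≤ n₀ ≤ n − 1 set P(n₀) := {ε_i − ε_j : i ≠ j and (i, j ≤ n₀ or i, j > n₀)} ∪ {ε_i − ε_j : i ≤ n₀ < j}. Then a subset P ⊆ Δ is a cominuscule parabolic set of roots of Δ if and only if there exist σ ∈ S_n and n₀ with 1 ≤ n₀ ≤ n − 1 such that σ(P) = P(n₀); each P(n₀) is itself a cominuscule parabolic set of roots, and for each cominuscule parabolic P the integer n₀ with this property is unique (so there are exactly n − 1 orbits). -/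

import Mathlib

open Pointwise

/-- A proper subset `P` of a symmetric root set `Δ` is a parabolic set of roots if
`Δ = P ∪ (-P)` and `P` is closed under sums lying in `Δ`. -/
def IsParabolic {V : Type*} [AddCommGroup V] (Δ P : Set V) : Prop :=
  P ⊂ Δ ∧ Δ = P ∪ (-P) ∧ ∀ α ∈ P, ∀ β ∈ P, α + β ∈ Δ → α + β ∈ P

/-- A parabolic set of roots is cominuscule if the sum of any two elements of its
nilradical `N⁺ = P \ (-P)` is not a root. -/
def IsCominuscule {V : Type*} [AddCommGroup V] (Δ P : Set V) : Prop :=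
  IsParabolic Δ P ∧ ∀ α ∈ P \ (-P), ∀ β ∈ P \ (-P), α + β ∉ Δ

namespace PSQ

variable {n : ℕ}

noncomputable def ε (i : Fin n) : Fin n → ℝ := Pi.single i 1

/-- The root system of `psq(n)`. -/
noncomputable def Δroot (n : ℕ) : Set (Fin n → ℝ) :=
  {v | ∃ i j : Fin n, i ≠ j ∧ v = ε i - ε j}

/-- The parabolic set `P(n₀)` (with `1 ≤ n₀ ≤ n-1` in 1-based indexing; here the
condition `i ≤ n₀` becomes `(i : ℕ) < n₀` in 0-based indexing). -/
noncomputable def P (n n₀ : ℕ) : Set (Fin n → ℝ) :=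
  {v | ∃ i j : Fin n, i ≠ j ∧
      (((i : ℕ) < n₀ ∧ (j : ℕ) < n₀) ∨ (n₀ ≤ (i : ℕ) ∧ n₀ ≤ (j : ℕ))) ∧ v = ε i - ε j} ∪
  {v | ∃ i j : Fin n, (i : ℕ) < n₀ ∧ n₀ ≤ (j : ℕ) ∧ v = ε i - ε j}

/-- The action of `σ ∈ Sₙ` on `ℝⁿ` permuting the `εᵢ`. -/
def act (σ : Equiv.Perm (Fin n)) : (Fin n → ℝ) → (Fin n → ℝ) :=
  fun v => v ∘ σ.symm

lemma eps_inj {i j : Fin n} (h : ε i = ε j) : i = j := by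
  have := congrFun h i
  simp [ε, Pi.single_apply] at this
  exact this

lemma root_eq_iff {i j k l : Fin n} (hij : i ≠ j) (hkl : k ≠ l) :
    ε i - ε j = ε k - ε l ↔ i = k ∧ j = l := by
  constructor
  · intro h
    have hi := congrFun h i
    have hj := congrFun h j
    simp [ε, Pi.single_apply, hij, hij.symm] at hi hj
    split_ifs at hi hj <;> simp_all <;> norm_num at hj
  · rintro ⟨rfl, rfl⟩; rfl

lemma sum_root {i j k l a b : Fin n} (hij : i ≠ j) (hkl : k ≠ l) (hab : a ≠ b)
    (h : (ε i - ε j) + (ε k - ε l) = ε a - ε b) :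
    (j = k ∧ a = i ∧ b = l) ∨ (i = l ∧ a = k ∧ b = j) := by
  have ha := congrFun h a
  have hb := congrFun h b
  simp [ε, Pi.single_apply, hab, hab.symm] at ha hb
  have hA : (a = i ∨ a = k) ∧ a ≠ j ∧ a ≠ l := by
    split_ifs at ha <;> norm_num at ha <;> refine ⟨by tauto, ?_, ?_⟩ <;> omega
  have hB : (b = j ∨ b = l) ∧ b ≠ i ∧ b ≠ k := by
    split_ifs at hb <;> norm_num at hb <;> refine ⟨by tauto, ?_, ?_⟩ <;> omega
  obtain ⟨hA1, hA2, hA3⟩ := hA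
  obtain ⟨hB1, hB2, hB3⟩ := hB
  rcases hA1 with rfl | rfl <;> rcases hB1 with rfl | rfl
  · exfalso; exact hkl (eps_inj (by linear_combination h))
  · exact Or.inl ⟨eps_inj (by linear_combination -h), rfl, rfl⟩
  · exact Or.inr ⟨eps_inj (by linear_combination h), rfl, rfl⟩
  · exfalso; exact hij (eps_inj (by linear_combination h))

lemma root_mem (i j : Fin n) (h : i ≠ j) : ε i - ε j ∈ Δroot n := ⟨i, j, h, rfl⟩

lemma neg_root (i j : Fin n) : -(ε i - ε j) = ε j - ε i := neg_sub _ _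

/-- The pattern of `P n n₀`, as a condition on index pairs. -/
def cond (n₀ : ℕ) (i j : Fin n) : Prop :=
  ((i : ℕ) < n₀ ∧ (j : ℕ) < n₀) ∨ (n₀ ≤ (i : ℕ) ∧ n₀ ≤ (j : ℕ)) ∨ ((i : ℕ) < n₀ ∧ n₀ ≤ (j : ℕ))

lemma mem_P_iff {n₀ : ℕ} {i j : Fin n} (hij : i ≠ j) :
    ε i - ε j ∈ P n n₀ ↔ cond n₀ i j := by
  constructor
  · rintro (⟨a, b, hab, hc, hv⟩ | ⟨a, b, ha, hb, hv⟩)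
    · obtain ⟨rfl, rfl⟩ := (root_eq_iff hij hab).1 hv
      exact hc.imp id Or.inl
    · have hab : a ≠ b := by intro h; rw [h] at ha; omega
      obtain ⟨rfl, rfl⟩ := (root_eq_iff hij hab).1 hv
      exact Or.inr (Or.inr ⟨ha, hb⟩)
  · rintro (h | h | h)
    · exact Or.inl ⟨i, j, hij, Or.inl h, rfl⟩
    · exact Or.inl ⟨i, j, hij, Or.inr h, rfl⟩
    · exact Or.inr ⟨i, j, h.1, h.2, rfl⟩

lemma P_subset {n₀ : ℕ} : P n n₀ ⊆ Δroot n := by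
  rintro v (⟨a, b, hab, _, rfl⟩ | ⟨a, b, ha, hb, rfl⟩)
  · exact ⟨a, b, hab, rfl⟩
  · exact ⟨a, b, by intro h; rw [h] at ha; omega, rfl⟩

lemma mem_sub_Δroot {Q : Set (Fin n → ℝ)} (hQ : Q ⊆ Δroot n) {v : Fin n → ℝ}
    (hv : v ∈ Q) : ∃ i j : Fin n, i ≠ j ∧ v = ε i - ε j := hQ hv

/-- `P n n₀` is cominuscule. -/
lemma P_cominuscule (n₀ : ℕ) (h1 : 1 ≤ n₀) (h2 : n₀ ≤ n - 1) (hn : 3 ≤ n) :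
    IsCominuscule (Δroot n) (P n n₀) := by
  have hn₀n : n₀ < n := by omega
  have a0 : Fin n := ⟨0, by omega⟩
  refine ⟨⟨⟨P_subset, ?_⟩, ?_, ?_⟩, ?_⟩
  · -- proper
    intro hsub
    have hmem : ε (⟨n₀, hn₀n⟩ : Fin n) - ε (⟨0, by omega⟩ : Fin n) ∈ P n n₀ := by
      apply hsub; exact root_mem _ _ (by simp [Fin.ext_iff]; omega)
    rw [mem_P_iff (by simp [Fin.ext_iff]; omega)] at hmem
    simp [cond] at hmem
    omega
  · -- Δ = P ∪ -P
    ext v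
    constructor
    · rintro ⟨i, j, hij, rfl⟩
      have hij' : (i : ℕ) ≠ (j : ℕ) := fun h => hij (Fin.ext h)
      by_cases hc : cond n₀ i j
      · exact Or.inl ((mem_P_iff hij).2 hc)
      · refine Or.inr ?_
        rw [Set.mem_neg, neg_root, mem_P_iff hij.symm]
        simp [cond] at hc ⊢
        omega
    · rintro (hv | hv)
      · exact P_subset hv
      · rw [Set.mem_neg] at hv
        obtain ⟨i, j, hij, hv'⟩ := P_subset hv
        have : v = ε j - ε i := by rw [← neg_root, ← hv', neg_neg]
        exact this ▸ root_mem j i hij.symm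
  · -- closed under sums
    rintro α hα β hβ ⟨a, b, hab, hs⟩
    obtain ⟨i, j, hij, rfl⟩ := P_subset hα
    obtain ⟨k, l, hkl, rfl⟩ := P_subset hβ
    rw [mem_P_iff hij] at hα
    rw [mem_P_iff hkl] at hβ
    rw [hs, mem_P_iff hab]
    rcases sum_root hij hkl hab hs with ⟨rfl, rfl, rfl⟩ | ⟨rfl, rfl, rfl⟩ <;>
      · simp only [cond] at hα hβ ⊢; omega
  · -- cominuscule
    rintro α ⟨hα, hα'⟩ β ⟨hβ, hβ'⟩ ⟨a, b, hab, hs⟩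
    obtain ⟨i, j, hij, rfl⟩ := P_subset hα
    obtain ⟨k, l, hkl, rfl⟩ := P_subset hβ
    rw [Set.mem_neg, neg_root] at hα' hβ'
    rw [mem_P_iff hij] at hα
    rw [mem_P_iff hkl] at hβ
    rw [mem_P_iff hij.symm] at hα'
    rw [mem_P_iff hkl.symm] at hβ'
    rcases sum_root hij hkl hab hs with ⟨rfl, _, _⟩ | ⟨rfl, _, _⟩ <;>
      · simp only [cond] at hα hβ hα' hβ'; omega
  

lemma act_neg (σ : Equiv.Perm (Fin n)) (v : Fin n → ℝ) : act σ (-v) = -(act σ v) := rfl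
lemma act_sub (σ : Equiv.Perm (Fin n)) (u v : Fin n → ℝ) :
    act σ (u - v) = act σ u - act σ v := rfl
lemma act_add (σ : Equiv.Perm (Fin n)) (u v : Fin n → ℝ) :
    act σ (u + v) = act σ u + act σ v := rfl
lemma act_act (σ τ : Equiv.Perm (Fin n)) (v : Fin n → ℝ) :
    act σ (act τ v) = act (σ * τ) v := rfl
lemma act_one (v : Fin n → ℝ) : act 1 v = v := rfl

lemma act_injective (σ : Equiv.Perm (Fin n)) : Function.Injective (act σ) := by
  intro u v h
  have := congrArg (act σ⁻¹) h
  simpa [act_act, act_one] using this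

lemma act_eps (σ : Equiv.Perm (Fin n)) (i : Fin n) : act σ (ε i) = ε (σ i) := by
  funext x
  simp only [act, Function.comp_apply, ε, Pi.single_apply]
  by_cases h : σ.symm x = i
  · rw [if_pos h, if_pos (by rw [← h, Equiv.apply_symm_apply])]
  · rw [if_neg h, if_neg (by intro h'; exact h (by rw [h', Equiv.symm_apply_apply]))]

lemma act_root (σ : Equiv.Perm (Fin n)) (i j : Fin n) :
    act σ (ε i - ε j) = ε (σ i) - ε (σ j) := by
  rw [act_sub, act_eps, act_eps]

lemma act_image_act_image (σ : Equiv.Perm (Fin n)) (Q : Set (Fin n → ℝ)) :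
    act σ⁻¹ '' (act σ '' Q) = Q := by
  rw [Set.image_image]
  have : (fun v => act σ⁻¹ (act σ v)) = id := by
    funext v; simp [act_act, act_one]
  rw [this, Set.image_id]

lemma act_image_Δroot (σ : Equiv.Perm (Fin n)) : act σ '' Δroot n = Δroot n := by
  ext v
  constructor
  · rintro ⟨w, ⟨i, j, hij, rfl⟩, rfl⟩
    exact ⟨σ i, σ j, fun h => hij (σ.injective h), (act_root σ i j)⟩
  · rintro ⟨i, j, hij, rfl⟩
    exact ⟨ε (σ.symm i) - ε (σ.symm j), ⟨σ.symm i, σ.symm j,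
      fun h => hij (σ.symm.injective h), rfl⟩, by rw [act_root]; simp⟩

lemma act_image_neg (σ : Equiv.Perm (Fin n)) (Q : Set (Fin n → ℝ)) :
    act σ '' (-Q) = -(act σ '' Q) := by
  ext v
  simp only [Set.mem_neg, Set.mem_image]
  constructor
  · rintro ⟨w, hw, rfl⟩
    exact ⟨-w, hw, by rw [act_neg]⟩
  · rintro ⟨w, hw, hv⟩
    exact ⟨-w, by simpa using hw, by rw [act_neg, hv, neg_neg]⟩

lemma isCominuscule_act (σ : Equiv.Perm (Fin n)) {Q : Set (Fin n → ℝ)}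
    (h : IsCominuscule (Δroot n) Q) : IsCominuscule (Δroot n) (act σ '' Q) := by
  obtain ⟨⟨hss, hcov, hclose⟩, hcom⟩ := h
  have hmemΔ : ∀ v, v ∈ Δroot n → act σ v ∈ Δroot n := by
    intro v hv
    rw [← act_image_Δroot σ]
    exact ⟨v, hv, rfl⟩
  have hmemΔ' : ∀ v, act σ v ∈ Δroot n → v ∈ Δroot n := by
    intro v hv
    rw [← act_image_Δroot σ] at hv
    obtain ⟨w, hw, hww⟩ := hv
    rwa [← act_injective σ hww]
  refine ⟨⟨?_, ?_, ?_⟩, ?_⟩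
  · rw [Set.ssubset_def]
    constructor
    · rintro v ⟨w, hw, rfl⟩
      exact hmemΔ w (hss.subset hw)
    · intro hcontra
      obtain ⟨v, hvΔ, hvQ⟩ := Set.exists_of_ssubset hss
      obtain ⟨w, hw, hww⟩ := hcontra (hmemΔ v hvΔ)
      exact hvQ ((act_injective σ hww) ▸ hw)
  · conv_lhs => rw [← act_image_Δroot σ, hcov]
    rw [Set.image_union, act_image_neg]
  · rintro α ⟨a, ha, rfl⟩ β ⟨b, hb, rfl⟩ hsum
    rw [← act_add] at hsum ⊢
    exact ⟨a + b, hclose a ha b hb (hmemΔ' _ hsum), rfl⟩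
  · rintro α ⟨⟨a, ha, rfl⟩, hneg⟩ β ⟨⟨b, hb, rfl⟩, hneg'⟩ hsum
    have haQ : a ∉ -Q := by
      intro h'
      exact hneg (by rw [← act_image_neg]; exact ⟨a, h', rfl⟩)
    have hbQ : b ∉ -Q := by
      intro h'
      exact hneg' (by rw [← act_image_neg]; exact ⟨b, h', rfl⟩)
    rw [← act_add] at hsum
    exact hcom a ⟨ha, haQ⟩ b ⟨hb, hbQ⟩ (hmemΔ' _ hsum)

/-- The abstract classification: a total, transitive relation whose strict part has no
2-chains and which is not total-symmetric comes from a two-block partition. -/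
lemma classify (R : Fin n → Fin n → Prop)
    (total : ∀ i j : Fin n, i ≠ j → R i j ∨ R j i)
    (htrans : ∀ i j k : Fin n, i ≠ j → j ≠ k → i ≠ k → R i j → R j k → R i k)
    (scomp : ∀ i j k : Fin n, i ≠ j → j ≠ k → R i j → ¬R j i → R j k → ¬R k j → False)
    (proper : ∃ i j : Fin n, i ≠ j ∧ ¬ R i j) :
    ∃ A : Finset (Fin n), A.Nonempty ∧ A ≠ Finset.univ ∧
      ∀ i j : Fin n, i ≠ j → (R i j ↔ (j ∈ A → i ∈ A)) := by
  classical
  set A : Finset (Fin n) :=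
    Finset.univ.filter (fun i => ∃ j, i ≠ j ∧ R i j ∧ ¬ R j i) with hAdef
  have hAmem : ∀ i : Fin n, i ∈ A ↔ ∃ j, i ≠ j ∧ R i j ∧ ¬ R j i := by
    intro i; simp [hAdef]
  obtain ⟨i0, j0, hij0, hnR⟩ := proper
  have hR0 : R j0 i0 := (total i0 j0 hij0).resolve_left hnR
  have hj0A : j0 ∈ A := (hAmem j0).2 ⟨i0, hij0.symm, hR0, hnR⟩
  have hsink : ∀ i k : Fin n, i ≠ k → R i k → ¬ R k i → k ∉ A := by
    intro i k hik hR hnR hkA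
    obtain ⟨l, hkl, hRkl, hnRlk⟩ := (hAmem k).1 hkA
    exact scomp i k l hik hkl hR hnR hRkl hnRlk
  have hi0A : i0 ∉ A := hsink j0 i0 hij0.symm hR0 hnR
  refine ⟨A, ⟨j0, hj0A⟩, fun h => hi0A (h ▸ Finset.mem_univ i0), ?_⟩
  have key : ∀ i j : Fin n, i ∈ A → j ∉ A → i ≠ j → R i j ∧ ¬ R j i := by
    intro i j hiA hjA hij
    obtain ⟨k, hik, hRik, hnRki⟩ := (hAmem i).1 hiA
    by_cases hjk : j = k
    · subst hjk; exact ⟨hRik, hnRki⟩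
    · have hcase : ¬ R j i := by
        intro hRji
        have hRjk : R j k := htrans j i k (Ne.symm hij) hik hjk hRji hRik
        have hnRkj : ¬ R k j := by
          intro hRkj
          exact hnRki (htrans k j i (fun h => hjk h.symm) hij.symm
            (fun h => hik h.symm) hRkj hRji)
        exact hjA ((hAmem j).2 ⟨k, hjk, hRjk, hnRkj⟩)
      exact ⟨(total i j hij).resolve_right hcase, hcase⟩
  intro i j hij
  by_cases hiA : i ∈ A <;> by_cases hjA : j ∈ A
  · constructor
    · intro _ _; exact hiA
    · intro _
      by_contra hnRij
      exact hsink j i hij.symm ((total i j hij).resolve_left hnRij) hnRij hiA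
  · exact ⟨fun _ h => absurd h hjA, fun _ => (key i j hiA hjA hij).1⟩
  · constructor
    · intro hRij
      exact absurd hRij (key j i hjA hiA hij.symm).2
    · intro h
      exact absurd (h hjA) hiA
  · constructor
    · intro _ h; exact absurd h hjA
    · intro _
      by_contra hnRij
      have hRji : R j i := (total i j hij).resolve_left hnRij
      exact hjA ((hAmem j).2 ⟨i, hij.symm, hRji, hnRij⟩)

def finLtEquiv {m : ℕ} (h : m ≤ n) : {x : Fin n // (x : ℕ) < m} ≃ Fin m where
  toFun x := ⟨x.1, x.2⟩
  invFun y := ⟨⟨y.1, lt_of_lt_of_le y.2 h⟩, y.2⟩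
  left_inv x := rfl
  right_inv y := rfl

lemma card_subtype_lt {m : ℕ} (h : m ≤ n) :
    Fintype.card {x : Fin n // (x : ℕ) < m} = m := by
  rw [Fintype.card_congr (finLtEquiv h), Fintype.card_fin]

lemma card_filter_lt {m : ℕ} (h : m ≤ n) :
    (Finset.univ.filter (fun x : Fin n => (x : ℕ) < m)).card = m := by
  classical
  rw [← Fintype.card_subtype, card_subtype_lt h]

lemma exists_perm (A : Finset (Fin n)) :
    ∃ σ : Equiv.Perm (Fin n), ∀ i, ((σ i : ℕ) < A.card ↔ i ∈ A) := by
  classical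
  set m := A.card with hm
  have hmn : m ≤ n := by
    simpa using Finset.card_le_card (Finset.subset_univ A)
  have e1 : {x : Fin n // x ∈ A} ≃ {x : Fin n // (x : ℕ) < m} := by
    apply Fintype.equivOfCardEq
    rw [Fintype.card_coe, card_subtype_lt hmn]
  have e2 : {x : Fin n // ¬ x ∈ A} ≃ {x : Fin n // ¬ (x : ℕ) < m} := by
    apply Fintype.equivOfCardEq
    rw [Fintype.card_subtype_compl, Fintype.card_subtype_compl,
      Fintype.card_coe, card_subtype_lt hmn]
  refine ⟨Equiv.subtypeCongr e1 e2, fun i => ?_⟩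
  by_cases hi : i ∈ A
  · have : Equiv.subtypeCongr e1 e2 i = ↑(e1 ⟨i, hi⟩) := by
      simp [Equiv.subtypeCongr, Equiv.sumCompl_symm_apply_of_pos hi]
    rw [this]
    exact ⟨fun _ => hi, fun _ => (e1 ⟨i, hi⟩).2⟩
  · have : Equiv.subtypeCongr e1 e2 i = ↑(e2 ⟨i, hi⟩) := by
      simp [Equiv.subtypeCongr, Equiv.sumCompl_symm_apply_of_neg hi]
    rw [this]
    exact ⟨fun h => absurd h (e2 ⟨i, hi⟩).2, fun h => absurd h hi⟩


end PSQ

theorem stmt_12 (n : ℕ) (hn : 3 ≤ n) (P : Set (Fin n → ℝ)) (hP : P ⊆ PSQ.Δroot n) :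
    (IsCominuscule (PSQ.Δroot n) P ↔
      ∃ (σ : Equiv.Perm (Fin n)) (n₀ : ℕ), 1 ≤ n₀ ∧ n₀ ≤ n - 1 ∧
        PSQ.act σ '' P = PSQ.P n n₀) ∧
    (∀ n₀ : ℕ, 1 ≤ n₀ → n₀ ≤ n - 1 → IsCominuscule (PSQ.Δroot n) (PSQ.P n n₀)) ∧
    (IsCominuscule (PSQ.Δroot n) P →
      ∀ (n₀ n₀' : ℕ) (σ σ' : Equiv.Perm (Fin n)),
        1 ≤ n₀ → n₀ ≤ n - 1 → 1 ≤ n₀' → n₀' ≤ n - 1 →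
        PSQ.act σ '' P = PSQ.P n n₀ → PSQ.act σ' '' P = PSQ.P n n₀' → n₀ = n₀') := by
  classical
  refine ⟨⟨?_, ?_⟩, ?_, ?_⟩
  · -- forward direction of the iff
    intro h
    obtain ⟨⟨hss, hcov, hclose⟩, hcom⟩ := h
    have total : ∀ i j : Fin n, i ≠ j →
        (PSQ.ε i - PSQ.ε j ∈ P ∨ PSQ.ε j - PSQ.ε i ∈ P) := by
      intro i j hij
      have hmem := PSQ.root_mem i j hij
      rw [hcov] at hmem
      rcases hmem with h | h
      · exact Or.inl h
      · right; rwa [Set.mem_neg, PSQ.neg_root] at h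
    have htrans : ∀ i j k : Fin n, i ≠ j → j ≠ k → i ≠ k →
        PSQ.ε i - PSQ.ε j ∈ P → PSQ.ε j - PSQ.ε k ∈ P → PSQ.ε i - PSQ.ε k ∈ P := by
      intro i j k hij hjk hik h1 h2
      have hsum : PSQ.ε i - PSQ.ε j + (PSQ.ε j - PSQ.ε k) = PSQ.ε i - PSQ.ε k :=
        sub_add_sub_cancel _ _ _
      have := hclose _ h1 _ h2 (by rw [hsum]; exact PSQ.root_mem i k hik)
      rwa [hsum] at this
    have scomp : ∀ i j k : Fin n, i ≠ j → j ≠ k →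
        PSQ.ε i - PSQ.ε j ∈ P → ¬(PSQ.ε j - PSQ.ε i ∈ P) →
        PSQ.ε j - PSQ.ε k ∈ P → ¬(PSQ.ε k - PSQ.ε j ∈ P) → False := by
      intro i j k hij hjk h1 h1' h2 h2'
      by_cases hik : i = k
      · subst hik; exact h2' h1
      · have hα : PSQ.ε i - PSQ.ε j ∈ P \ (-P) :=
          ⟨h1, by rw [Set.mem_neg, PSQ.neg_root]; exact h1'⟩
        have hβ : PSQ.ε j - PSQ.ε k ∈ P \ (-P) :=
          ⟨h2, by rw [Set.mem_neg, PSQ.neg_root]; exact h2'⟩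
        have hns := hcom _ hα _ hβ
        rw [sub_add_sub_cancel] at hns
        exact hns (PSQ.root_mem i k hik)
    have proper : ∃ i j : Fin n, i ≠ j ∧ ¬(PSQ.ε i - PSQ.ε j ∈ P) := by
      obtain ⟨v, hvΔ, hvP⟩ := Set.exists_of_ssubset hss
      obtain ⟨i, j, hij, rfl⟩ := hvΔ
      exact ⟨i, j, hij, hvP⟩
    obtain ⟨A, hA1, hA2, hchar⟩ :=
      PSQ.classify (fun i j => PSQ.ε i - PSQ.ε j ∈ P) total htrans scomp proper
    obtain ⟨σ, hσ⟩ := PSQ.exists_perm A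
    have hcardlt : A.card < n := by
      have h1 : A.card ≤ n := by
        simpa using Finset.card_le_card (Finset.subset_univ A)
      rcases lt_or_eq_of_le h1 with h | h
      · exact h
      · exact absurd (Finset.eq_univ_of_card A (h.trans (Fintype.card_fin n).symm)) hA2
    refine ⟨σ, A.card, hA1.card_pos, by omega, ?_⟩
    ext v
    constructor
    · rintro ⟨w, hw, rfl⟩
      obtain ⟨i, j, hij, rfl⟩ := hP hw
      rw [PSQ.act_root]
      have hRij : (j ∈ A → i ∈ A) := (hchar i j hij).1 hw
      have hσij : σ i ≠ σ j := fun h => hij (σ.injective h)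
      rw [PSQ.mem_P_iff hσij]
      simp only [PSQ.cond]
      by_cases hiA : i ∈ A <;> by_cases hjA : j ∈ A
      · have e1 := (hσ i).2 hiA
        have e2 := (hσ j).2 hjA
        omega
      · have e1 := (hσ i).2 hiA
        have e2 : ¬ ((σ j : ℕ) < A.card) := fun h => hjA ((hσ j).1 h)
        omega
      · exact absurd (hRij hjA) hiA
      · have e1 : ¬ ((σ i : ℕ) < A.card) := fun h => hiA ((hσ i).1 h)
        have e2 : ¬ ((σ j : ℕ) < A.card) := fun h => hjA ((hσ j).1 h)
        omega
    · intro hv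
      obtain ⟨a, b, hab, rfl⟩ := PSQ.P_subset hv
      rw [PSQ.mem_P_iff hab] at hv
      refine ⟨PSQ.ε (σ.symm a) - PSQ.ε (σ.symm b), ?_,
        by rw [PSQ.act_root]; simp⟩
      have hab' : σ.symm a ≠ σ.symm b := fun h => hab (σ.symm.injective h)
      refine (hchar _ _ hab').2 ?_
      intro hbA
      have hb : (b : ℕ) < A.card := by
        have := (hσ (σ.symm b)).2 hbA
        simpa using this
      have ha : (a : ℕ) < A.card := by
        simp only [PSQ.cond] at hv; omega
      exact (hσ (σ.symm a)).1 (by simpa using ha)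
  · -- backward direction of the iff
    rintro ⟨σ, n₀, h1, h2, himg⟩
    have hP' : P = PSQ.act σ⁻¹ '' (PSQ.P n n₀) := by
      rw [← himg, PSQ.act_image_act_image]
    rw [hP']
    exact PSQ.isCominuscule_act σ⁻¹ (PSQ.P_cominuscule n₀ h1 h2 hn)
  · -- each P n₀ is cominuscule
    intro n₀ h1 h2
    exact PSQ.P_cominuscule n₀ h1 h2 hn
  · -- uniqueness of n₀
    intro _ n₀ n₀' σ σ' hb1 hb2 hb1' hb2' himg himg'
    set τ := σ' * σ⁻¹ with hτdef
    have himg2 : PSQ.act τ '' (PSQ.P n n₀) = PSQ.P n n₀' := by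
      rw [← himg, Set.image_image]
      have hfun : (fun v => PSQ.act τ (PSQ.act σ v)) = PSQ.act σ' := by
        funext v
        rw [PSQ.act_act, hτdef]
        congr 1
        group
      rw [hfun]
      exact himg'
    have himg3 : PSQ.act τ⁻¹ '' (PSQ.P n n₀') = PSQ.P n n₀ := by
      rw [← himg2, PSQ.act_image_act_image]
    have key : ∀ a : Fin n, (a : ℕ) < n₀ → ((τ a : ℕ) < n₀') := by
      intro a ha
      have hb : n₀ < n := by omega
      set b : Fin n := ⟨n₀, hb⟩ with hbdef
      have hbv : (b : ℕ) = n₀ := rfl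
      have hab : a ≠ b := by
        intro h
        rw [h, hbv] at ha
        omega
      have h1 : PSQ.ε a - PSQ.ε b ∈ PSQ.P n n₀ :=
        (PSQ.mem_P_iff hab).2 (Or.inr (Or.inr ⟨ha, le_of_eq hbv.symm⟩))
      have h2 : PSQ.ε b - PSQ.ε a ∉ PSQ.P n n₀ := by
        rw [PSQ.mem_P_iff hab.symm]
        simp only [PSQ.cond, hbv]
        omega
      have hτab : τ a ≠ τ b := fun h => hab (τ.injective h)
      have h1' : PSQ.ε (τ a) - PSQ.ε (τ b) ∈ PSQ.P n n₀' := by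
        rw [← himg2]; exact ⟨_, h1, PSQ.act_root τ a b⟩
      have h2' : PSQ.ε (τ b) - PSQ.ε (τ a) ∉ PSQ.P n n₀' := by
        intro hmem
        apply h2
        rw [← himg3]
        exact ⟨_, hmem, by rw [PSQ.act_root]; simp⟩
      rw [PSQ.mem_P_iff hτab] at h1'
      rw [PSQ.mem_P_iff hτab.symm, not_iff_not.2 (Iff.rfl)] at h2'
      simp only [PSQ.cond] at h1' h2'
      omega
    have key' : ∀ a : Fin n, (a : ℕ) < n₀' → ((τ⁻¹ a : ℕ) < n₀) := by
      intro a ha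
      have hb : n₀' < n := by omega
      set b : Fin n := ⟨n₀', hb⟩ with hbdef
      have hbv : (b : ℕ) = n₀' := rfl
      have hab : a ≠ b := by
        intro h
        rw [h, hbv] at ha
        omega
      have h1 : PSQ.ε a - PSQ.ε b ∈ PSQ.P n n₀' :=
        (PSQ.mem_P_iff hab).2 (Or.inr (Or.inr ⟨ha, le_of_eq hbv.symm⟩))
      have h2 : PSQ.ε b - PSQ.ε a ∉ PSQ.P n n₀' := by
        rw [PSQ.mem_P_iff hab.symm]
        simp only [PSQ.cond, hbv]
        omega
      have hτab : τ⁻¹ a ≠ τ⁻¹ b := fun h => hab (τ⁻¹.injective h)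
      have h1' : PSQ.ε (τ⁻¹ a) - PSQ.ε (τ⁻¹ b) ∈ PSQ.P n n₀ := by
        rw [← himg3]; exact ⟨_, h1, PSQ.act_root τ⁻¹ a b⟩
      have h2' : PSQ.ε (τ⁻¹ b) - PSQ.ε (τ⁻¹ a) ∉ PSQ.P n n₀ := by
        intro hmem
        apply h2
        rw [← himg2]
        refine ⟨_, hmem, by rw [PSQ.act_root]; simp⟩
      rw [PSQ.mem_P_iff hτab] at h1'
      rw [PSQ.mem_P_iff hτab.symm, not_iff_not.2 (Iff.rfl)] at h2'
      simp only [PSQ.cond] at h1' h2'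
      omega
    have hle : n₀ ≤ n₀' := by
      have hinc : (Finset.univ.filter (fun x : Fin n => (x : ℕ) < n₀)).image τ ⊆
          Finset.univ.filter (fun x : Fin n => (x : ℕ) < n₀') := by
        intro x hx
        simp only [Finset.mem_image, Finset.mem_filter] at hx ⊢
        obtain ⟨y, ⟨_, hy⟩, rfl⟩ := hx
        exact ⟨Finset.mem_univ _, key y hy⟩
      have hc := Finset.card_le_card hinc
      rwa [Finset.card_image_of_injective _ τ.injective,
        PSQ.card_filter_lt (by omega : n₀ ≤ n),
        PSQ.card_filter_lt (by omega : n₀' ≤ n)] at hc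
    have hge : n₀' ≤ n₀ := by
      have hinc : (Finset.univ.filter (fun x : Fin n => (x : ℕ) < n₀')).image ⇑(τ⁻¹) ⊆
          Finset.univ.filter (fun x : Fin n => (x : ℕ) < n₀) := by
        intro x hx
        simp only [Finset.mem_image, Finset.mem_filter] at hx ⊢
        obtain ⟨y, ⟨_, hy⟩, rfl⟩ := hx
        exact ⟨Finset.mem_univ _, key' y hy⟩
      have hc := Finset.card_le_card hinc
      rwa [Finset.card_image_of_injective _ (τ⁻¹).injective,
        PSQ.card_filter_lt (by omega : n₀' ≤ n),
        PSQ.card_filter_lt (by omega : n₀ ≤ n)] at hc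
    omega
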